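/- arXiv:1608.02695 — 2 statements merged into one kernel-verified Lean document; each statement's English description precedes it below -/
import Mathlib

section
/- P̄_cor^opt(C_2) = C_2. Moreover, if C_1 < C_2, then a POVM (M_0,M_1,M_2) attains P̄_cor = P̄_cor^opt(C_2) if and only if M_1 = 0 and ρ_0^{1/2}M_2ρ_0^{1/2} = β|ν_2⟩⟨ν_2| for some β with 0 ≤ β ≤ 1 − Q_1 (and then ρ_0^{1/2}M_0ρ_0^{1/2} = ρ_0 − β|ν_2⟩⟨ν_2|). -/
open Matrix ComplexOrder

noncomputable section

namespace FRIR

set_option linter.unusedSectionVars false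
set_option maxHeartbeats 1000000

section Helpers

variable {n : Type*} [Fintype n] [DecidableEq n]

lemma trace_vecMulVec' (u v : n → ℂ) : (vecMulVec u v).trace = v ⬝ᵥ u := by
  simp [Matrix.trace, Matrix.diag, vecMulVec_apply, dotProduct, mul_comm]

lemma vecMulVec_mul_vecMulVec (u v w x : n → ℂ) :
    vecMulVec u v * vecMulVec w x = (v ⬝ᵥ w) • vecMulVec u x := by
  ext i j
  simp only [Matrix.mul_apply, vecMulVec_apply, Matrix.smul_apply, dotProduct,
    Finset.sum_mul, smul_eq_mul, Finset.mul_sum]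
  exact Finset.sum_congr rfl fun k _ => by ring

lemma mul_vecMulVec (C : Matrix n n ℂ) (u v : n → ℂ) :
    C * vecMulVec u v = vecMulVec (C *ᵥ u) v := by
  ext i j
  simp only [Matrix.mul_apply, vecMulVec_apply, Matrix.mulVec, dotProduct, Finset.sum_mul]
  exact Finset.sum_congr rfl fun k _ => by ring

lemma trace_mul_vecMulVec (C : Matrix n n ℂ) (u v : n → ℂ) :
    (C * vecMulVec u v).trace = v ⬝ᵥ (C *ᵥ u) := by
  rw [mul_vecMulVec, trace_vecMulVec']

lemma vecMulVec_posSemidef (u : n → ℂ) : (vecMulVec u (star u)).PosSemidef := by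
  rw [vecMulVec_eq Unit, ← conjTranspose_replicateCol]
  exact posSemidef_self_mul_conjTranspose _

lemma vecMulVec_zero_left (v : n → ℂ) : vecMulVec (0 : n → ℂ) v = 0 := by
  ext i j; simp [vecMulVec_apply]

lemma vecMulVec_herm (u : n → ℂ) : (vecMulVec u (star u))ᴴ = vecMulVec u (star u) := by
  ext i j; simp [vecMulVec_apply, conjTranspose_apply, mul_comm]

lemma posSemidef_real_smul {A : Matrix n n ℂ} (hA : A.PosSemidef) {c : ℝ} (hc : 0 ≤ c) :
    ((c : ℂ) • A).PosSemidef := by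
  refine posSemidef_iff_dotProduct_mulVec.mpr ⟨?_, ?_⟩
  · rw [IsHermitian, conjTranspose_smul, hA.1]
    congr 1
    simp
  · intro x
    rw [smul_mulVec, dotProduct_smul, smul_eq_mul]
    exact mul_nonneg (by exact_mod_cast hc) (hA.dotProduct_mulVec_nonneg x)

lemma posDef_real_smul {A : Matrix n n ℂ} (hA : A.PosDef) {c : ℝ} (hc : 0 < c) :
    ((c : ℂ) • A).PosDef := by
  refine posDef_iff_dotProduct_mulVec.mpr ⟨?_, ?_⟩
  · rw [IsHermitian, conjTranspose_smul, hA.1.eq]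
    congr 1
    simp
  · intro x hx
    rw [smul_mulVec, dotProduct_smul, smul_eq_mul]
    exact mul_pos (Complex.zero_lt_real.mpr hc) (hA.dotProduct_mulVec_pos hx)

lemma herm_dot {M : Matrix n n ℂ} (hM : M.IsHermitian) (x y : n → ℂ) :
    star x ⬝ᵥ (M *ᵥ y) = star (star y ⬝ᵥ (M *ᵥ x)) := by
  conv_lhs => rw [star_dotProduct, star_mulVec, hM.eq, ← dotProduct_mulVec]

lemma diag_conj (C A : Matrix n n ℂ) (i : n) :
    (C * A * Cᴴ) i i = star (star (C i)) ⬝ᵥ (A *ᵥ star (C i)) := by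
  simp only [Matrix.mul_apply, Matrix.mulVec, dotProduct, conjTranspose_apply,
    Pi.star_apply, star_star, Finset.sum_mul, Finset.mul_sum]
  rw [Finset.sum_comm]
  exact Finset.sum_congr rfl fun k _ => Finset.sum_congr rfl fun l _ => by ring

lemma psd_eq_conjTranspose_mul_self {B : Matrix n n ℂ} (hB : B.PosSemidef) :
    ∃ C : Matrix n n ℂ, B = Cᴴ * C := by
  open scoped MatrixOrder in
  obtain ⟨X, hX, -, hXX⟩ :=
    CFC.exists_sqrt_of_isSelfAdjoint_of_quasispectrumRestricts hB.isHermitian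
      (QuasispectrumRestricts.nnreal_of_nonneg (Matrix.nonneg_iff_posSemidef.mpr hB))
  refine ⟨X, ?_⟩
  rw [← hXX]
  nth_rewrite 1 [← hX.star_eq]
  rfl

lemma trace_mul_re_nonneg {A B : Matrix n n ℂ} (hA : A.PosSemidef) (hB : B.PosSemidef) :
    0 ≤ ((A * B).trace).re := by
  obtain ⟨C, rfl⟩ := psd_eq_conjTranspose_mul_self hB
  have h : (A * (Cᴴ * C)).trace = (C * A * Cᴴ).trace := by
    rw [← Matrix.mul_assoc, Matrix.trace_mul_comm, ← Matrix.mul_assoc]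
  rw [h, Matrix.trace, Complex.re_sum]
  refine Finset.sum_nonneg fun i _ => ?_
  rw [Matrix.diag_apply, diag_conj]
  exact hA.re_dotProduct_nonneg _

lemma eq_zero_of_trace_mul {A B : Matrix n n ℂ} (hA : A.PosDef) (hB : B.PosSemidef)
    (h : ((A * B).trace).re = 0) : B = 0 := by
  obtain ⟨C, rfl⟩ := psd_eq_conjTranspose_mul_self hB
  have htr : (A * (Cᴴ * C)).trace = (C * A * Cᴴ).trace := by
    rw [← Matrix.mul_assoc, Matrix.trace_mul_comm, ← Matrix.mul_assoc]
  rw [htr, Matrix.trace, Complex.re_sum] at h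
  have hC : C = 0 := by
    ext i j
    have hi : ((C * A * Cᴴ) i i).re = 0 := by
      have := Finset.sum_eq_zero_iff_of_nonneg (fun i _ => by
        rw [Matrix.diag_apply, diag_conj]; exact hA.posSemidef.re_dotProduct_nonneg _) |>.mp h
      simpa using this i (Finset.mem_univ i)
    rw [diag_conj] at hi
    by_contra hij
    have hne : star (C i) ≠ 0 := by
      intro h0
      apply hij
      have := congrFun h0 j
      simpa using this
    have := hA.re_dotProduct_pos hne
    exact absurd hi this.ne'
  rw [hC]
  simp

lemma trace_conj_swap (S A B : Matrix n n ℂ) :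
    (S * A * S * B).trace = (A * (S * B * S)).trace := by
  calc (S * A * S * B).trace = ((S * A) * (S * B)).trace := by rw [Matrix.mul_assoc]
    _ = ((S * B) * (S * A)).trace := Matrix.trace_mul_comm _ _
    _ = ((S * B * S) * A).trace := by rw [← Matrix.mul_assoc]
    _ = (A * (S * B * S)).trace := Matrix.trace_mul_comm _ _

lemma completeness (ν₁ ν₂ : Fin 2 → ℂ)
    (hν₁ : star ν₁ ⬝ᵥ ν₁ = 1) (hν₂ : star ν₂ ⬝ᵥ ν₂ = 1) (hν₁₂ : star ν₁ ⬝ᵥ ν₂ = 0) :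
    vecMulVec ν₁ (star ν₁) + vecMulVec ν₂ (star ν₂) = 1 := by
  have hν₂₁ : star ν₂ ⬝ᵥ ν₁ = 0 := by
    have := congrArg star hν₁₂
    rwa [star_dotProduct, star_star, star_zero] at this
  set U : Matrix (Fin 2) (Fin 2) ℂ := Matrix.of (fun i j => ![ν₁, ν₂] j i) with hU
  have h1 : Uᴴ * U = 1 := by
    ext i j
    fin_cases i <;> fin_cases j <;>
      simpa [hU, Matrix.mul_apply, Matrix.conjTranspose_apply, Fin.sum_univ_two, dotProduct,
        Matrix.one_apply] using by
          first
          | simpa [dotProduct, Fin.sum_univ_two] using hν₁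
          | simpa [dotProduct, Fin.sum_univ_two] using hν₁₂
          | simpa [dotProduct, Fin.sum_univ_two] using hν₂₁
          | simpa [dotProduct, Fin.sum_univ_two] using hν₂
  have h2 : U * Uᴴ = 1 := mul_eq_one_comm.mpr h1
  rw [← h2]
  ext i j
  simp [hU, Matrix.mul_apply, Matrix.conjTranspose_apply, Fin.sum_univ_two, vecMulVec_apply]

lemma rank_one_of_kernel (ν₁ ν₂ : Fin 2 → ℂ)
    (hcomp : vecMulVec ν₁ (star ν₁) + vecMulVec ν₂ (star ν₂) = 1)
    {N : Matrix (Fin 2) (Fin 2) ℂ} (hN : N.IsHermitian) (h0 : N *ᵥ ν₁ = 0) :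
    N = (star ν₂ ⬝ᵥ (N *ᵥ ν₂)) • vecMulVec ν₂ (star ν₂) := by
  set P₁ := vecMulVec ν₁ (star ν₁) with hP₁
  set P₂ := vecMulVec ν₂ (star ν₂) with hP₂
  have hNP₁ : N * P₁ = 0 := by
    rw [hP₁, mul_vecMulVec, h0, vecMulVec_zero_left]
  have hP₁N : P₁ * N = 0 := by
    have : (N * P₁)ᴴ = P₁ * N := by
      rw [conjTranspose_mul, hN.eq, hP₁, vecMulVec_herm]
    rw [← this, hNP₁, conjTranspose_zero]
  have key : N = (P₁ + P₂) * N * (P₁ + P₂) := by rw [hcomp]; simp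
  conv_lhs => rw [key]
  rw [add_mul, hP₁N, zero_add, mul_add, Matrix.mul_assoc, hNP₁, Matrix.mul_zero, zero_add,
    Matrix.mul_assoc, hP₂, mul_vecMulVec, vecMulVec_mul_vecMulVec]

end Helpers

lemma vecMulVec_mulVec {n : Type*} [Fintype n] (u w v : n → ℂ) :
    vecMulVec u w *ᵥ v = (w ⬝ᵥ v) • u := by
  ext i
  simp only [Matrix.mulVec, vecMulVec_apply, dotProduct, Pi.smul_apply, smul_eq_mul,
    Finset.sum_mul]
  exact Finset.sum_congr rfl fun k _ => by ring



/-- A three-outcome POVM on a qubit: `M₀` is the inconclusive outcome. -/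
def IsPOVM (M₀ M₁ M₂ : Matrix (Fin 2) (Fin 2) ℂ) : Prop :=
  M₀.PosSemidef ∧ M₁.PosSemidef ∧ M₂.PosSemidef ∧ M₀ + M₁ + M₂ = 1

/-- `ρ₀ = q₁ρ₁ + q₂ρ₂`. -/
def rho0 (q₁ q₂ : ℝ) (ρ₁ ρ₂ : Matrix (Fin 2) (Fin 2) ℂ) : Matrix (Fin 2) (Fin 2) ℂ :=
  (q₁ : ℂ) • ρ₁ + (q₂ : ℂ) • ρ₂

/-- The probability of the inconclusive result, `P_I = tr(ρ₀M₀)`. -/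
def PIof (q₁ q₂ : ℝ) (ρ₁ ρ₂ M₀ : Matrix (Fin 2) (Fin 2) ℂ) : ℝ :=
  (Matrix.trace (rho0 q₁ q₂ ρ₁ ρ₂ * M₀)).re

/-- `P_cor = q₁tr(ρ₁M₁) + q₂tr(ρ₂M₂)`. -/
def Pcor (q₁ q₂ : ℝ) (ρ₁ ρ₂ M₁ M₂ : Matrix (Fin 2) (Fin 2) ℂ) : ℝ :=
  q₁ * (Matrix.trace (ρ₁ * M₁)).re + q₂ * (Matrix.trace (ρ₂ * M₂)).re

/-- `P̄_cor = q·tr(ρ₀M₀) + q₁tr(ρ₁M₁) + q₂tr(ρ₂M₂)`. -/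
def PbarCor (q q₁ q₂ : ℝ) (ρ₁ ρ₂ M₀ M₁ M₂ : Matrix (Fin 2) (Fin 2) ℂ) : ℝ :=
  q * PIof q₁ q₂ ρ₁ ρ₂ M₀ + Pcor q₁ q₂ ρ₁ ρ₂ M₁ M₂

/-- `P̄_cor^opt(q)`: the maximal value of `P̄_cor` over all POVMs. -/
def PbarOpt (q q₁ q₂ : ℝ) (ρ₁ ρ₂ : Matrix (Fin 2) (Fin 2) ℂ) : ℝ :=
  sSup {x : ℝ | ∃ M₀ M₁ M₂, IsPOVM M₀ M₁ M₂ ∧ PbarCor q q₁ q₂ ρ₁ ρ₂ M₀ M₁ M₂ = x}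

/-- `P_cor^opt(Q)`: the maximal value of `P_cor` over POVMs with `P_I = Q`. -/
def PcorOpt (Q q₁ q₂ : ℝ) (ρ₁ ρ₂ : Matrix (Fin 2) (Fin 2) ℂ) : ℝ :=
  sSup {x : ℝ | ∃ M₀ M₁ M₂, IsPOVM M₀ M₁ M₂ ∧
    PIof q₁ q₂ ρ₁ ρ₂ M₀ = Q ∧ Pcor q₁ q₂ ρ₁ ρ₂ M₁ M₂ = x}

/-- `P_I(q) = { tr(ρ₀M₀) : POVMs attaining P̄_cor^opt(q) }`. -/
def PIset (q q₁ q₂ : ℝ) (ρ₁ ρ₂ : Matrix (Fin 2) (Fin 2) ℂ) : Set ℝ :=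
  {Q : ℝ | ∃ M₀ M₁ M₂, IsPOVM M₀ M₁ M₂ ∧
    PbarCor q q₁ q₂ ρ₁ ρ₂ M₀ M₁ M₂ = PbarOpt q q₁ q₂ ρ₁ ρ₂ ∧ PIof q₁ q₂ ρ₁ ρ₂ M₀ = Q}

/-- `q₀⁽⁰⁾ = sup{q > 0 : 0 ∈ P_I(q)}`. -/
def q0low (q₁ q₂ : ℝ) (ρ₁ ρ₂ : Matrix (Fin 2) (Fin 2) ℂ) : ℝ :=
  sSup {q : ℝ | 0 < q ∧ (0 : ℝ) ∈ PIset q q₁ q₂ ρ₁ ρ₂}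

/-- `q₀⁽¹⁾ = inf{q > 0 : 1 ∈ P_I(q)}`. -/
def q0high (q₁ q₂ : ℝ) (ρ₁ ρ₂ : Matrix (Fin 2) (Fin 2) ℂ) : ℝ :=
  sInf {q : ℝ | 0 < q ∧ (1 : ℝ) ∈ PIset q q₁ q₂ ρ₁ ρ₂}

/-- `P̄_cor^opt(C₂) = C₂`; moreover if `C₁ < C₂` then a POVM is
optimal for inconclusive degree `C₂` iff `M₁ = 0` and `ρ₀^½M₂ρ₀^½ = β|ν₂⟩⟨ν₂|`
for some `0 ≤ β ≤ 1 − Q₁` (and then `ρ₀^½M₀ρ₀^½ = ρ₀ − β|ν₂⟩⟨ν₂|`). -/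
theorem stmt5
    (q₁ q₂ : ℝ) (ρ₁ ρ₂ : Matrix (Fin 2) (Fin 2) ℂ)
    (hq₁ : 0 < q₁) (hq₂ : 0 < q₂) (hq : q₁ + q₂ = 1)
    (hρ₁ : ρ₁.PosSemidef) (htr₁ : ρ₁.trace = 1)
    (hρ₂ : ρ₂.PosSemidef) (htr₂ : ρ₂.trace = 1)
    (hρ0 : (rho0 q₁ q₂ ρ₁ ρ₂).PosDef)
    (S : Matrix (Fin 2) (Fin 2) ℂ) (hS : S.PosSemidef) (hSS : S * S = rho0 q₁ q₂ ρ₁ ρ₂)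
    (ν₁ ν₂ : Fin 2 → ℂ)
    (hν₁ : star ν₁ ⬝ᵥ ν₁ = 1) (hν₂ : star ν₂ ⬝ᵥ ν₂ = 1) (hν₁₂ : star ν₁ ⬝ᵥ ν₂ = 0)
    (C₁ C₂ : ℝ) (hC12 : C₁ ≤ C₂) (hCsum : 1 < C₁ + C₂)
    (hbar₁ : S * ((C₁ : ℂ) • vecMulVec ν₁ (star ν₁)
        + ((1 - C₂ : ℝ) : ℂ) • vecMulVec ν₂ (star ν₂)) * S = (q₁ : ℂ) • ρ₁)
    (hbar₂ : S * (((1 - C₁ : ℝ) : ℂ) • vecMulVec ν₁ (star ν₁)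
        + (C₂ : ℂ) • vecMulVec ν₂ (star ν₂)) * S = (q₂ : ℂ) • ρ₂)
    (ρ11 ρ22 : ℝ) (ρ12 : ℂ)
    (h11 : (ρ11 : ℂ) = star ν₁ ⬝ᵥ (rho0 q₁ q₂ ρ₁ ρ₂ *ᵥ ν₁))
    (h22 : (ρ22 : ℂ) = star ν₂ ⬝ᵥ (rho0 q₁ q₂ ρ₁ ρ₂ *ᵥ ν₂))
    (h12 : ρ12 = star ν₁ ⬝ᵥ (rho0 q₁ q₂ ρ₁ ρ₂ *ᵥ ν₂))
    :
    PbarOpt C₂ q₁ q₂ ρ₁ ρ₂ = C₂ ∧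
      (C₁ < C₂ → ∀ M₀ M₁ M₂ : Matrix (Fin 2) (Fin 2) ℂ, IsPOVM M₀ M₁ M₂ →
        (PbarCor C₂ q₁ q₂ ρ₁ ρ₂ M₀ M₁ M₂ = PbarOpt C₂ q₁ q₂ ρ₁ ρ₂ ↔
          (M₁ = 0 ∧ ∃ β : ℝ, 0 ≤ β ∧ β ≤ 1 - (ρ11 + ‖ρ12‖ ^ 2 / ρ11) ∧
            S * M₂ * S = (β : ℂ) • vecMulVec ν₂ (star ν₂) ∧
            S * M₀ * S = rho0 q₁ q₂ ρ₁ ρ₂ - (β : ℂ) • vecMulVec ν₂ (star ν₂)))) := by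
  classical
  have hν₂₁ : star ν₂ ⬝ᵥ ν₁ = 0 := by
    have := congrArg star hν₁₂
    rwa [star_dotProduct, star_star, star_zero] at this
  set P₁ := vecMulVec ν₁ (star ν₁) with hP₁def
  set P₂ := vecMulVec ν₂ (star ν₂) with hP₂def
  have hcomp : P₁ + P₂ = 1 := completeness ν₁ ν₂ hν₁ hν₂ hν₁₂
  have hP₁psd : P₁.PosSemidef := vecMulVec_posSemidef ν₁
  have hP₂psd : P₂.PosSemidef := vecMulVec_posSemidef ν₂
  have hSH : Sᴴ = S := hS.1
  have htrρ0 : (rho0 q₁ q₂ ρ₁ ρ₂).trace = 1 := by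
    rw [rho0, Matrix.trace_add, Matrix.trace_smul, Matrix.trace_smul, htr₁, htr₂]
    simp only [smul_eq_mul, mul_one]
    exact_mod_cast hq
  have h2C₂ : 0 < 2 * C₂ - 1 := by linarith
  have hC₂C₁ : 0 ≤ C₂ - C₁ := by linarith
  have hCC : 0 < C₁ + C₂ - 1 := by linarith
  set A₁ := ((C₂ - C₁ : ℝ) : ℂ) • P₁ + ((2 * C₂ - 1 : ℝ) : ℂ) • P₂ with hA₁def
  set A₂ := ((C₁ + C₂ - 1 : ℝ) : ℂ) • P₁ with hA₂def
  have hA₁psd : A₁.PosSemidef :=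
    (posSemidef_real_smul hP₁psd hC₂C₁).add (posSemidef_real_smul hP₂psd h2C₂.le)
  have hA₂psd : A₂.PosSemidef := posSemidef_real_smul hP₁psd hCC.le
  have hNpsd : ∀ M : Matrix (Fin 2) (Fin 2) ℂ, M.PosSemidef → (S * M * S).PosSemidef := by
    intro M hM
    have := hM.mul_mul_conjTranspose_same S
    rwa [hSH] at this
  -- Master identity
  have master : ∀ M₀ M₁ M₂ : Matrix (Fin 2) (Fin 2) ℂ, M₀ + M₁ + M₂ = 1 →
      PbarCor C₂ q₁ q₂ ρ₁ ρ₂ M₀ M₁ M₂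
        = C₂ - (((A₁ * (S * M₁ * S)).trace).re + ((A₂ * (S * M₂ * S)).trace).re) := by
    intro M₀ M₁ M₂ hsum
    have e0 : (rho0 q₁ q₂ ρ₁ ρ₂ * M₀).trace = ((1 : Matrix (Fin 2) (Fin 2) ℂ) * (S * M₀ * S)).trace := by
      rw [← hSS]
      calc (S * S * M₀).trace = (S * 1 * S * M₀).trace := by rw [Matrix.mul_one]
        _ = ((1 : Matrix (Fin 2) (Fin 2) ℂ) * (S * M₀ * S)).trace := trace_conj_swap S 1 M₀
    have e1 : (q₁ : ℂ) * (ρ₁ * M₁).trace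
        = (((C₁ : ℂ) • P₁ + ((1 - C₂ : ℝ) : ℂ) • P₂) * (S * M₁ * S)).trace := by
      calc (q₁ : ℂ) * (ρ₁ * M₁).trace = (((q₁ : ℂ) • ρ₁) * M₁).trace := by
            rw [Matrix.smul_mul, Matrix.trace_smul, smul_eq_mul]
        _ = (S * ((C₁ : ℂ) • P₁ + ((1 - C₂ : ℝ) : ℂ) • P₂) * S * M₁).trace := by rw [hbar₁]
        _ = _ := trace_conj_swap S _ M₁
    have e2 : (q₂ : ℂ) * (ρ₂ * M₂).trace
        = ((((1 - C₁ : ℝ) : ℂ) • P₁ + (C₂ : ℂ) • P₂) * (S * M₂ * S)).trace := by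
      calc (q₂ : ℂ) * (ρ₂ * M₂).trace = (((q₂ : ℂ) • ρ₂) * M₂).trace := by
            rw [Matrix.smul_mul, Matrix.trace_smul, smul_eq_mul]
        _ = (S * (((1 - C₁ : ℝ) : ℂ) • P₁ + (C₂ : ℂ) • P₂) * S * M₂).trace := by rw [hbar₂]
        _ = _ := trace_conj_swap S _ M₂
    have hb₁ : ((C₁ : ℂ) • P₁ + ((1 - C₂ : ℝ) : ℂ) • P₂) + A₁
        = (C₂ : ℂ) • (1 : Matrix (Fin 2) (Fin 2) ℂ) := by
      rw [hA₁def, ← hcomp]; push_cast; module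
    have hb₂ : ((((1 - C₁ : ℝ) : ℂ) • P₁ + (C₂ : ℂ) • P₂)) + A₂
        = (C₂ : ℂ) • (1 : Matrix (Fin 2) (Fin 2) ℂ) := by
      rw [hA₂def, ← hcomp]; push_cast; module
    have hx₁ : (((C₁ : ℂ) • P₁ + ((1 - C₂ : ℝ) : ℂ) • P₂) * (S * M₁ * S)).trace
        + (A₁ * (S * M₁ * S)).trace = (C₂ : ℂ) * (S * M₁ * S).trace := by
      rw [← Matrix.trace_add, ← Matrix.add_mul, hb₁, Matrix.smul_mul, Matrix.one_mul,
        Matrix.trace_smul, smul_eq_mul]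
    have hx₂ : ((((1 - C₁ : ℝ) : ℂ) • P₁ + (C₂ : ℂ) • P₂) * (S * M₂ * S)).trace
        + (A₂ * (S * M₂ * S)).trace = (C₂ : ℂ) * (S * M₂ * S).trace := by
      rw [← Matrix.trace_add, ← Matrix.add_mul, hb₂, Matrix.smul_mul, Matrix.one_mul,
        Matrix.trace_smul, smul_eq_mul]
    have h3 : (S * M₀ * S).trace + (S * M₁ * S).trace + (S * M₂ * S).trace = 1 := by
      rw [← Matrix.trace_add, ← Matrix.trace_add]
      have : S * M₀ * S + S * M₁ * S + S * M₂ * S = S * (M₀ + M₁ + M₂) * S := by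
        noncomm_ring
      rw [this, hsum, Matrix.mul_one, hSS, htrρ0]
    have key : (C₂ : ℂ) * (rho0 q₁ q₂ ρ₁ ρ₂ * M₀).trace + (q₁ : ℂ) * (ρ₁ * M₁).trace
        + (q₂ : ℂ) * (ρ₂ * M₂).trace + (A₁ * (S * M₁ * S)).trace + (A₂ * (S * M₂ * S)).trace
        = (C₂ : ℂ) := by
      rw [e0, e1, e2, Matrix.one_mul]
      linear_combination hx₁ + hx₂ + (C₂ : ℂ) * h3
    have keyre := congrArg Complex.re key
    simp only [Complex.add_re, Complex.mul_re, Complex.ofReal_re, Complex.ofReal_im,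
      zero_mul, sub_zero] at keyre
    simp only [PbarCor, PIof, Pcor]
    linarith [keyre]
  -- Part 1
  have hopt : PbarOpt C₂ q₁ q₂ ρ₁ ρ₂ = C₂ := by
    apply IsGreatest.csSup_eq
    constructor
    · refine ⟨1, 0, 0, ⟨Matrix.PosSemidef.one, Matrix.PosSemidef.zero, Matrix.PosSemidef.zero,
        by simp⟩, ?_⟩
      rw [master 1 0 0 (by simp)]
      simp
    · rintro x ⟨M₀, M₁, M₂, hpovm, rfl⟩
      rw [master M₀ M₁ M₂ hpovm.2.2.2]
      have t₁ := trace_mul_re_nonneg hA₁psd (hNpsd M₁ hpovm.2.1)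
      have t₂ := trace_mul_re_nonneg hA₂psd (hNpsd M₂ hpovm.2.2.1)
      linarith
  refine ⟨hopt, ?_⟩
  intro hC M₀ M₁ M₂ hpovm
  rw [hopt]
  have hN₁psd := hNpsd M₁ hpovm.2.1
  have hN₂psd := hNpsd M₂ hpovm.2.2.1
  have hN₀psd := hNpsd M₀ hpovm.1
  constructor
  · intro heq
    rw [master M₀ M₁ M₂ hpovm.2.2.2] at heq
    have t₁nn := trace_mul_re_nonneg hA₁psd hN₁psd
    have t₂nn := trace_mul_re_nonneg hA₂psd hN₂psd
    have ht₁ : ((A₁ * (S * M₁ * S)).trace).re = 0 := by linarith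
    have ht₂ : ((A₂ * (S * M₂ * S)).trace).re = 0 := by linarith
    -- A₁ is positive definite
    have hA₁pd : A₁.PosDef := by
      have hc : 0 < min (C₂ - C₁) (2 * C₂ - 1) := lt_min (by linarith) h2C₂
      have hes : A₁ = ((min (C₂ - C₁) (2 * C₂ - 1) : ℝ) : ℂ) • (1 : Matrix (Fin 2) (Fin 2) ℂ)
          + ((C₂ - C₁ - min (C₂ - C₁) (2 * C₂ - 1) : ℝ) : ℂ) • P₁
          + ((2 * C₂ - 1 - min (C₂ - C₁) (2 * C₂ - 1) : ℝ) : ℂ) • P₂ := by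
        rw [hA₁def, ← hcomp]; push_cast; module
      rw [hes]
      exact Matrix.PosDef.add_posSemidef
        (Matrix.PosDef.add_posSemidef (posDef_real_smul Matrix.PosDef.one hc)
          (posSemidef_real_smul hP₁psd (by simp [min_le_left])))
        (posSemidef_real_smul hP₂psd (by simp [min_le_right]))
    have hN₁0 : S * M₁ * S = 0 := eq_zero_of_trace_mul hA₁pd hN₁psd ht₁
    -- S is invertible
    have hSdet : IsUnit S.det := by
      have hd : S.det * S.det = (rho0 q₁ q₂ ρ₁ ρ₂).det := by rw [← Matrix.det_mul, hSS]
      have hne : (rho0 q₁ q₂ ρ₁ ρ₂).det ≠ 0 := hρ0.det_pos.ne'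
      refine isUnit_iff_ne_zero.mpr fun h0 => hne ?_
      rw [← hd, h0, mul_zero]
    haveI := Matrix.invertibleOfIsUnitDet S hSdet
    have hM₁0 : M₁ = 0 := by
      have e : S * (M₁ * S) = S * (0 : Matrix (Fin 2) (Fin 2) ℂ) := by
        rw [← Matrix.mul_assoc, hN₁0, Matrix.mul_zero]
      have e2 : M₁ * S = 0 := Matrix.mul_right_injective_of_invertible S e
      have e3 : M₁ * S = (0 : Matrix (Fin 2) (Fin 2) ℂ) * S := by rw [e2, Matrix.zero_mul]
      exact Matrix.mul_left_injective_of_invertible S e3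
    -- N₂ analysis
    have htrace2 : (A₂ * (S * M₂ * S)).trace
        = ((C₁ + C₂ - 1 : ℝ) : ℂ) * (star ν₁ ⬝ᵥ ((S * M₂ * S) *ᵥ ν₁)) := by
      rw [hA₂def, Matrix.smul_mul, Matrix.trace_smul, Matrix.trace_mul_comm, hP₁def,
        trace_mul_vecMulVec, smul_eq_mul]
    have hz₁ : (0 : ℂ) ≤ star ν₁ ⬝ᵥ ((S * M₂ * S) *ᵥ ν₁) := hN₂psd.dotProduct_mulVec_nonneg ν₁
    have hz₁im : (star ν₁ ⬝ᵥ ((S * M₂ * S) *ᵥ ν₁)).im = 0 := by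
      have := (Complex.le_def.mp hz₁).2; simpa using this.symm
    have hz₁re : (star ν₁ ⬝ᵥ ((S * M₂ * S) *ᵥ ν₁)).re = 0 := by
      rw [htrace2] at ht₂
      simp only [Complex.mul_re, Complex.ofReal_re, Complex.ofReal_im, zero_mul,
        sub_zero] at ht₂
      have := (Complex.le_def.mp hz₁).1
      nlinarith [hCC]
    have hz₁0 : star ν₁ ⬝ᵥ ((S * M₂ * S) *ᵥ ν₁) = 0 := Complex.ext hz₁re hz₁im
    have hker : (S * M₂ * S) *ᵥ ν₁ = 0 := (hN₂psd.dotProduct_mulVec_zero_iff ν₁).mp hz₁0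
    have hexp := rank_one_of_kernel ν₁ ν₂ hcomp hN₂psd.1 hker
    set z₂ := star ν₂ ⬝ᵥ ((S * M₂ * S) *ᵥ ν₂) with hz₂def
    have hz₂ : (0 : ℂ) ≤ z₂ := hN₂psd.dotProduct_mulVec_nonneg ν₂
    have hz₂im : z₂.im = 0 := by have := (Complex.le_def.mp hz₂).2; simpa using this.symm
    have hz₂re : 0 ≤ z₂.re := (Complex.le_def.mp hz₂).1
    have hz₂eq : z₂ = ((z₂.re : ℝ) : ℂ) := Complex.ext (by simp) (by simp [hz₂im])
    set β := z₂.re with hβdef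
    have hSM₂S : S * M₂ * S = (β : ℂ) • P₂ := by rw [hexp, ← hz₂eq]
    have hSM₀S : S * M₀ * S = rho0 q₁ q₂ ρ₁ ρ₂ - (β : ℂ) • P₂ := by
      have hM₀ : M₀ = 1 - M₂ := by
        have hsum := hpovm.2.2.2
        rw [hM₁0, add_zero] at hsum
        exact eq_sub_of_add_eq hsum
      rw [hM₀, Matrix.mul_sub, Matrix.sub_mul, Matrix.mul_one, hSS, hSM₂S]
    -- the bound on β
    have hν₁ne : ν₁ ≠ 0 := by
      intro h0
      rw [h0] at hν₁
      simp at hν₁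
    have hρ11pos : 0 < ρ11 := by
      have := hρ0.re_dotProduct_pos hν₁ne
      rw [← h11] at this
      simpa using this
    have hρ11ne : (ρ11 : ℂ) ≠ 0 := by exact_mod_cast hρ11pos.ne'
    have hsum1 : ρ11 + ρ22 = 1 := by
      have hc : ((ρ11 : ℂ)) + (ρ22 : ℂ) = 1 := by
        rw [h11, h22, ← trace_mul_vecMulVec (rho0 q₁ q₂ ρ₁ ρ₂) ν₁ (star ν₁),
          ← trace_mul_vecMulVec (rho0 q₁ q₂ ρ₁ ρ₂) ν₂ (star ν₂), ← Matrix.trace_add,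
          ← Matrix.mul_add]
        rw [← hP₁def, ← hP₂def, hcomp, Matrix.mul_one, htrρ0]
      exact_mod_cast hc
    have hρ21 : star ν₂ ⬝ᵥ (rho0 q₁ q₂ ρ₁ ρ₂ *ᵥ ν₁) = star ρ12 := by
      rw [herm_dot hρ0.1 ν₂ ν₁, ← h12]
    set c : ℂ := -(ρ12 / (ρ11 : ℂ)) with hcdef
    have hbilin : ∀ M : Matrix (Fin 2) (Fin 2) ℂ,
        star (c • ν₁ + ν₂) ⬝ᵥ (M *ᵥ (c • ν₁ + ν₂))
          = star c * c * (star ν₁ ⬝ᵥ (M *ᵥ ν₁)) + star c * (star ν₁ ⬝ᵥ (M *ᵥ ν₂))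
            + c * (star ν₂ ⬝ᵥ (M *ᵥ ν₁)) + star ν₂ ⬝ᵥ (M *ᵥ ν₂) := by
      intro M
      simp only [star_add, star_smul, Matrix.mulVec_add, Matrix.mulVec_smul,
        dotProduct_add, add_dotProduct, smul_dotProduct, dotProduct_smul, smul_eq_mul]
      ring
    have hP₂dots : ∀ u : Fin 2 → ℂ, ((β : ℂ) • P₂) *ᵥ u = ((β : ℂ) * (star ν₂ ⬝ᵥ u)) • ν₂ := by
      intro u
      rw [hP₂def, smul_mulVec, vecMulVec_mulVec, smul_smul]
    have hval : star (c • ν₁ + ν₂) ⬝ᵥ ((rho0 q₁ q₂ ρ₁ ρ₂ - (β : ℂ) • P₂) *ᵥ (c • ν₁ + ν₂))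
        = ((ρ22 - ‖ρ12‖ ^ 2 / ρ11 - β : ℝ) : ℂ) := by
      rw [Matrix.sub_mulVec]
      rw [dotProduct_sub]
      rw [hbilin (rho0 q₁ q₂ ρ₁ ρ₂)]
      have hd1 : star (c • ν₁ + ν₂) ⬝ᵥ (((β : ℂ) • P₂) *ᵥ (c • ν₁ + ν₂)) = (β : ℂ) := by
        rw [hP₂dots]
        simp [dotProduct_add, dotProduct_smul, add_dotProduct, smul_dotProduct, star_add,
          star_smul, hν₂₁, hν₁₂, hν₂]
      rw [hd1, ← h11, ← h12, hρ21, ← h22]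
      have habs : (starRingEnd ℂ) ρ12 * ρ12 = ((‖ρ12‖ : ℝ) : ℂ) ^ 2 := by
        rw [← Complex.normSq_eq_conj_mul_self, ← Complex.ofReal_pow, Complex.sq_norm]
      rw [hcdef]
      push_cast
      field_simp
      ring_nf
      rw [← habs, Complex.star_def]
      ring
    have hx := hN₀psd.dotProduct_mulVec_nonneg (c • ν₁ + ν₂)
    rw [hSM₀S, hval] at hx
    have hxr : 0 ≤ ρ22 - ‖ρ12‖ ^ 2 / ρ11 - β := by
      have h' := (Complex.le_def.mp hx).1
      rwa [Complex.ofReal_re, Complex.zero_re] at h'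
    refine ⟨hM₁0, β, hz₂re, by linarith, hSM₂S, hSM₀S⟩
  · rintro ⟨hM₁, β, hβ0, hβle, hSM₂S, hSM₀S⟩
    rw [master M₀ M₁ M₂ hpovm.2.2.2, hM₁]
    have h1 : S * (0 : Matrix (Fin 2) (Fin 2) ℂ) * S = 0 := by
      rw [Matrix.mul_zero, Matrix.zero_mul]
    have h2 : A₂ * ((β : ℂ) • P₂) = 0 := by
      rw [hA₂def, Matrix.smul_mul, Matrix.mul_smul, hP₁def, hP₂def, vecMulVec_mul_vecMulVec,
        hν₁₂]
      simp
    rw [h1, hSM₂S, h2]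
    simp



end FRIR
end
end

section
/- If C_1 ≤ 1/2 < C_2, then P̄_cor^opt(1−C_1) = q_2 and P_I(1−C_1) = [0, 1−Q_2]; consequently q_0^{(0)} = 1−C_1. -/
open Matrix ComplexOrder

noncomputable section

namespace FRIR

/-! ### Auxiliary lemmas -/

lemma dp_conj (u x : Fin 2 → ℂ) : star x ⬝ᵥ u = starRingEnd ℂ (star u ⬝ᵥ x) := by
  simp only [dotProduct, Pi.star_apply, Fin.sum_univ_two, map_add, _root_.map_mul,
    Complex.star_def, Complex.conj_conj]
  ring

lemma quadform_vmv (u x : Fin 2 → ℂ) :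
    star x ⬝ᵥ (vecMulVec u (star u) *ᵥ x) = (star x ⬝ᵥ u) * (star u ⬝ᵥ x) := by
  simp only [dotProduct, mulVec, vecMulVec_apply, Pi.star_apply, Fin.sum_univ_two]
  ring

lemma vmv_herm (u : Fin 2 → ℂ) : (vecMulVec u (star u))ᴴ = vecMulVec u (star u) := by
  ext i j
  simp [conjTranspose_apply, vecMulVec_apply, mul_comm]

lemma trace_vmv_mul (a : Fin 2 → ℂ) (M : Matrix (Fin 2) (Fin 2) ℂ) :
    Matrix.trace (vecMulVec a (star a) * M) = star a ⬝ᵥ (M *ᵥ a) := by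
  simp only [Matrix.trace, Matrix.diag, Matrix.mul_apply, vecMulVec_apply, dotProduct, mulVec,
    Pi.star_apply, Fin.sum_univ_two]
  ring

lemma trace_vmv (a : Fin 2 → ℂ) :
    Matrix.trace (vecMulVec a (star a)) = star a ⬝ᵥ a := by
  simp only [Matrix.trace, Matrix.diag, vecMulVec_apply, dotProduct, Pi.star_apply,
    Fin.sum_univ_two]
  ring

lemma sandwich (S : Matrix (Fin 2) (Fin 2) ℂ) (hS : Sᴴ = S) (a : Fin 2 → ℂ) :
    S * vecMulVec a (star a) * S = vecMulVec (S *ᵥ a) (star (S *ᵥ a)) := by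
  have h : ∀ i j, S i j = starRingEnd ℂ (S j i) := by
    intro i j; rw [← congrFun (congrFun hS i) j]; simp [conjTranspose_apply]
  ext i j
  simp only [Matrix.mul_apply, vecMulVec_apply, mulVec, dotProduct, Pi.star_apply,
    Fin.sum_univ_two, star_sum, star_mul', map_add, _root_.map_mul, Complex.star_def]
  rw [h 0 j, h 1 j]
  ring

lemma dp_mul (S : Matrix (Fin 2) (Fin 2) ℂ) (hS : Sᴴ = S) (a b : Fin 2 → ℂ) :
    star (S *ᵥ a) ⬝ᵥ (S *ᵥ b) = star a ⬝ᵥ ((S * S) *ᵥ b) := by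
  have h : ∀ i j, S i j = starRingEnd ℂ (S j i) := by
    intro i j; rw [← congrFun (congrFun hS i) j]; simp [conjTranspose_apply]
  simp only [dotProduct, mulVec, Matrix.mul_apply, Pi.star_apply, Fin.sum_univ_two, map_add,
    _root_.map_mul, Complex.star_def]
  rw [← h 0 0, ← h 1 0, ← h 0 1, ← h 1 1]
  ring

lemma conj_form (M : Matrix (Fin 2) (Fin 2) ℂ) (hM : Mᴴ = M) (a b : Fin 2 → ℂ) :
    star b ⬝ᵥ (M *ᵥ a) = starRingEnd ℂ (star a ⬝ᵥ (M *ᵥ b)) := by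
  have h : ∀ i j, M i j = starRingEnd ℂ (M j i) := by
    intro i j; rw [← congrFun (congrFun hM i) j]; simp [conjTranspose_apply]
  simp only [dotProduct, mulVec, Pi.star_apply, Fin.sum_univ_two, map_add, _root_.map_mul,
    Complex.star_def, Complex.conj_conj]
  rw [h 1 0, ← h 0 0, ← h 1 1]
  simp only [Complex.conj_conj]
  ring

lemma psd_smul_vmv (c : ℝ) (hc : 0 ≤ c) (u : Fin 2 → ℂ) :
    ((c:ℂ) • vecMulVec u (star u)).PosSemidef := by
  refine Matrix.PosSemidef.of_dotProduct_mulVec_nonneg ?_ ?_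
  · show _ᴴ = _
    rw [conjTranspose_smul, vmv_herm]
    simp
  · intro x
    rw [smul_mulVec, dotProduct_smul, smul_eq_mul, quadform_vmv, dp_conj]
    exact mul_nonneg (by exact_mod_cast hc) (star_mul_self_nonneg _)

lemma psd_zero : (0 : Matrix (Fin 2) (Fin 2) ℂ).PosSemidef := by
  constructor
  · simp [Matrix.IsHermitian]
  · intro x; simp

lemma psd_add {A B : Matrix (Fin 2) (Fin 2) ℂ} (hA : A.PosSemidef) (hB : B.PosSemidef) :
    (A + B).PosSemidef := by
  refine Matrix.PosSemidef.of_dotProduct_mulVec_nonneg ?_ ?_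
  · show _ᴴ = _
    rw [conjTranspose_add, hA.1, hB.1]
  · intro x
    rw [add_mulVec, dotProduct_add]
    exact add_nonneg (hA.dotProduct_mulVec_nonneg x) (hB.dotProduct_mulVec_nonneg x)

lemma resolution (ν₁ ν₂ : Fin 2 → ℂ) (h1 : star ν₁ ⬝ᵥ ν₁ = 1) (h2 : star ν₂ ⬝ᵥ ν₂ = 1)
    (h12 : star ν₁ ⬝ᵥ ν₂ = 0) :
    vecMulVec ν₁ (star ν₁) + vecMulVec ν₂ (star ν₂) = 1 := by
  have h21 : star ν₂ ⬝ᵥ ν₁ = 0 := by rw [dp_conj ν₁ ν₂, h12, map_zero]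
  set U : Matrix (Fin 2) (Fin 2) ℂ := Matrix.of fun i k => ![ν₁, ν₂] k i with hU
  have hUU : Uᴴ * U = 1 := by
    ext k l
    fin_cases k <;> fin_cases l <;>
      simpa [hU, Matrix.mul_apply, conjTranspose_apply, dotProduct, Pi.star_apply,
        Fin.sum_univ_two, Matrix.one_apply] using by
        first
        | simpa [dotProduct, Fin.sum_univ_two] using h1
        | simpa [dotProduct, Fin.sum_univ_two] using h12
        | simpa [dotProduct, Fin.sum_univ_two] using h21
        | simpa [dotProduct, Fin.sum_univ_two] using h2
  have hUU' : U * Uᴴ = 1 := mul_eq_one_comm.mp hUU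
  rw [← hUU']
  ext i j
  simp [hU, Matrix.mul_apply, conjTranspose_apply, vecMulVec_apply, Fin.sum_univ_two, mul_comm]

lemma cs (u x : Fin 2 → ℂ) :
    Complex.normSq (star u ⬝ᵥ x) ≤ (star u ⬝ᵥ u).re * (star x ⬝ᵥ x).re := by
  let u' : EuclideanSpace ℂ (Fin 2) := WithLp.toLp 2 u
  let x' : EuclideanSpace ℂ (Fin 2) := WithLp.toLp 2 x
  have hi : (inner ℂ u' x' : ℂ) = star u ⬝ᵥ x := by
    rw [PiLp.inner_apply]; simp [u', x', dotProduct, RCLike.inner_apply, mul_comm]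
  have hiu : (inner ℂ u' u' : ℂ) = star u ⬝ᵥ u := by
    rw [PiLp.inner_apply]; simp [u', x', dotProduct, RCLike.inner_apply, Complex.mul_conj', Complex.conj_mul']
  have hix : (inner ℂ x' x' : ℂ) = star x ⬝ᵥ x := by
    rw [PiLp.inner_apply]; simp [u', x', dotProduct, RCLike.inner_apply, Complex.mul_conj', Complex.conj_mul']
  have h1 : Complex.normSq (star u ⬝ᵥ x) = ‖(inner ℂ u' x' : ℂ)‖ ^ 2 := by
    rw [hi, Complex.sq_norm]
  have h2 : (star u ⬝ᵥ u).re = ‖u'‖ ^ 2 := by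
    rw [← hiu, ← inner_self_eq_norm_sq (𝕜 := ℂ)]
    rfl
  have h3 : (star x ⬝ᵥ x).re = ‖x'‖ ^ 2 := by
    rw [← hix, ← inner_self_eq_norm_sq (𝕜 := ℂ)]
    rfl
  rw [h1, h2, h3]
  calc ‖(inner ℂ u' x' : ℂ)‖ ^ 2 ≤ (‖u'‖ * ‖x'‖) ^ 2 := by
        have := norm_inner_le_norm (𝕜 := ℂ) u' x'
        exact pow_le_pow_left₀ (norm_nonneg _) this 2
    _ = ‖u'‖ ^ 2 * ‖x'‖ ^ 2 := by ring

lemma weighted_trace (c d e : ℝ) (ρ M : Matrix (Fin 2) (Fin 2) ℂ) (w₁ w₂ : Fin 2 → ℂ)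
    (hd : (e:ℂ) • ρ = (c:ℂ) • vecMulVec w₁ (star w₁) + (d:ℂ) • vecMulVec w₂ (star w₂)) :
    e * (Matrix.trace (ρ * M)).re
      = c * (star w₁ ⬝ᵥ (M *ᵥ w₁)).re + d * (star w₂ ⬝ᵥ (M *ᵥ w₂)).re := by
  have h1 : Matrix.trace (((e:ℂ) • ρ) * M) = (e:ℂ) * Matrix.trace (ρ * M) := by
    rw [smul_mul_assoc, trace_smul, smul_eq_mul]
  have h2 : Matrix.trace (((e:ℂ) • ρ) * M)
      = (c:ℂ) * (star w₁ ⬝ᵥ (M *ᵥ w₁)) + (d:ℂ) * (star w₂ ⬝ᵥ (M *ᵥ w₂)) := by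
    rw [hd, add_mul, smul_mul_assoc, smul_mul_assoc, trace_add, trace_smul, trace_smul,
      trace_vmv_mul, trace_vmv_mul, smul_eq_mul, smul_eq_mul]
  have h3 := h1.symm.trans h2
  have hre := congrArg Complex.re h3
  simpa [Complex.add_re, Complex.re_ofReal_mul] using hre

lemma nonneg_re_of_psd {M : Matrix (Fin 2) (Fin 2) ℂ} (hM : M.PosSemidef) (w : Fin 2 → ℂ) :
    0 ≤ (star w ⬝ᵥ (M *ᵥ w)).re :=
  (Complex.le_def.mp (hM.dotProduct_mulVec_nonneg w)).1

lemma eq_re_of_psd {M : Matrix (Fin 2) (Fin 2) ℂ} (hM : M.PosSemidef) (w : Fin 2 → ℂ) :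
    star w ⬝ᵥ (M *ᵥ w) = ((star w ⬝ᵥ (M *ᵥ w)).re : ℂ) := by
  have him := (Complex.le_def.mp (hM.dotProduct_mulVec_nonneg w)).2
  apply Complex.ext
  · simp
  · rw [← him]; simp

lemma comb_dp (a b : ℂ) (v₁ v₂ x : Fin 2 → ℂ) :
    star (a • v₁ - b • v₂) ⬝ᵥ x
      = starRingEnd ℂ a * (star v₁ ⬝ᵥ x) - starRingEnd ℂ b * (star v₂ ⬝ᵥ x) := by
  simp only [dotProduct, Fin.sum_univ_two, Pi.star_apply, Pi.smul_apply, Pi.sub_apply,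
    smul_eq_mul, Complex.star_def, map_sub, _root_.map_mul]
  ring

lemma dp_comb (a b : ℂ) (v₁ v₂ x : Fin 2 → ℂ) :
    x ⬝ᵥ (a • v₁ - b • v₂) = a * (x ⬝ᵥ v₁) - b * (x ⬝ᵥ v₂) := by
  simp only [dotProduct, Fin.sum_univ_two, Pi.smul_apply, Pi.sub_apply, smul_eq_mul]
  ring
set_option maxHeartbeats 1600000

/-- If `C₁ ≤ 1/2 < C₂`, then `P̄_cor^opt(1−C₁) = q₂` and
`P_I(1−C₁) = [0, 1−Q₂]`; consequently `q₀⁽⁰⁾ = 1−C₁`. -/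
theorem stmt8
    (q₁ q₂ : ℝ) (ρ₁ ρ₂ : Matrix (Fin 2) (Fin 2) ℂ)
    (hq₁ : 0 < q₁) (hq₂ : 0 < q₂) (hq : q₁ + q₂ = 1)
    (hρ₁ : ρ₁.PosSemidef) (htr₁ : ρ₁.trace = 1)
    (hρ₂ : ρ₂.PosSemidef) (htr₂ : ρ₂.trace = 1)
    (hρ0 : (rho0 q₁ q₂ ρ₁ ρ₂).PosDef)
    (S : Matrix (Fin 2) (Fin 2) ℂ) (hS : S.PosSemidef) (hSS : S * S = rho0 q₁ q₂ ρ₁ ρ₂)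
    (ν₁ ν₂ : Fin 2 → ℂ)
    (hν₁ : star ν₁ ⬝ᵥ ν₁ = 1) (hν₂ : star ν₂ ⬝ᵥ ν₂ = 1) (hν₁₂ : star ν₁ ⬝ᵥ ν₂ = 0)
    (C₁ C₂ : ℝ) (hC12 : C₁ ≤ C₂) (hCsum : 1 < C₁ + C₂)
    (hbar₁ : S * ((C₁ : ℂ) • vecMulVec ν₁ (star ν₁)
        + ((1 - C₂ : ℝ) : ℂ) • vecMulVec ν₂ (star ν₂)) * S = (q₁ : ℂ) • ρ₁)
    (hbar₂ : S * (((1 - C₁ : ℝ) : ℂ) • vecMulVec ν₁ (star ν₁)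
        + (C₂ : ℂ) • vecMulVec ν₂ (star ν₂)) * S = (q₂ : ℂ) • ρ₂)
    (ρ11 ρ22 : ℝ) (ρ12 : ℂ)
    (h11 : (ρ11 : ℂ) = star ν₁ ⬝ᵥ (rho0 q₁ q₂ ρ₁ ρ₂ *ᵥ ν₁))
    (h22 : (ρ22 : ℂ) = star ν₂ ⬝ᵥ (rho0 q₁ q₂ ρ₁ ρ₂ *ᵥ ν₂))
    (h12 : ρ12 = star ν₁ ⬝ᵥ (rho0 q₁ q₂ ρ₁ ρ₂ *ᵥ ν₂))
    (hC₁ : C₁ ≤ 1 / 2) (hC₂ : 1 / 2 < C₂) :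
    PbarOpt (1 - C₁) q₁ q₂ ρ₁ ρ₂ = q₂ ∧
      PIset (1 - C₁) q₁ q₂ ρ₁ ρ₂ = Set.Icc 0 (1 - (ρ22 + ‖ρ12‖ ^ 2 / ρ22)) ∧
      q0low q₁ q₂ ρ₁ ρ₂ = 1 - C₁ := by
  have hSH : Sᴴ = S := hS.1
  set w₁ : Fin 2 → ℂ := S *ᵥ ν₁ with hw₁
  set w₂ : Fin 2 → ℂ := S *ᵥ ν₂ with hw₂
  have hres : vecMulVec ν₁ (star ν₁) + vecMulVec ν₂ (star ν₂) = 1 :=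
    resolution ν₁ ν₂ hν₁ hν₂ hν₁₂
  -- decompositions
  have hdecomp0 : rho0 q₁ q₂ ρ₁ ρ₂ = vecMulVec w₁ (star w₁) + vecMulVec w₂ (star w₂) := by
    rw [← hSS]
    calc S * S = S * (vecMulVec ν₁ (star ν₁) + vecMulVec ν₂ (star ν₂)) * S := by
          rw [hres, mul_one]
      _ = vecMulVec w₁ (star w₁) + vecMulVec w₂ (star w₂) := by
          rw [mul_add, add_mul, sandwich S hSH, sandwich S hSH]
  have hdecomp1 : ((q₁ : ℝ) : ℂ) • ρ₁
      = ((C₁ : ℝ) : ℂ) • vecMulVec w₁ (star w₁)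
        + ((1 - C₂ : ℝ) : ℂ) • vecMulVec w₂ (star w₂) := by
    rw [← hbar₁, mul_add, add_mul, mul_smul_comm, mul_smul_comm, smul_mul_assoc,
      smul_mul_assoc, sandwich S hSH, sandwich S hSH]
  have hdecomp2 : ((q₂ : ℝ) : ℂ) • ρ₂
      = ((1 - C₁ : ℝ) : ℂ) • vecMulVec w₁ (star w₁)
        + ((C₂ : ℝ) : ℂ) • vecMulVec w₂ (star w₂) := by
    rw [← hbar₂, mul_add, add_mul, mul_smul_comm, mul_smul_comm, smul_mul_assoc,
      smul_mul_assoc, sandwich S hSH, sandwich S hSH]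
  -- inner products of w's
  have r11 : star w₁ ⬝ᵥ w₁ = (ρ11 : ℂ) := by
    rw [hw₁, dp_mul S hSH, hSS]; exact h11.symm
  have r22 : star w₂ ⬝ᵥ w₂ = (ρ22 : ℂ) := by
    rw [hw₂, dp_mul S hSH, hSS]; exact h22.symm
  have r12 : star w₁ ⬝ᵥ w₂ = ρ12 := by
    rw [hw₁, hw₂, dp_mul S hSH, hSS]; exact h12.symm
  have r21 : star w₂ ⬝ᵥ w₁ = starRingEnd ℂ ρ12 := by
    rw [dp_conj w₁ w₂, r12]
  -- positivity
  have hν₁ne : ν₁ ≠ 0 := by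
    intro h; rw [h] at hν₁; simp at hν₁
  have hν₂ne : ν₂ ≠ 0 := by
    intro h; rw [h] at hν₂; simp at hν₂
  have hρ11pos : 0 < ρ11 := by
    have h := hρ0.dotProduct_mulVec_pos hν₁ne
    rw [← h11] at h
    exact Complex.zero_lt_real.mp h
  have hρ22pos : 0 < ρ22 := by
    have h := hρ0.dotProduct_mulVec_pos hν₂ne
    rw [← h22] at h
    exact Complex.zero_lt_real.mp h
  -- trace of rho0 is 1, hence ρ11 + ρ22 = 1
  have htrρ0 : Matrix.trace (rho0 q₁ q₂ ρ₁ ρ₂) = 1 := by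
    rw [rho0, trace_add, trace_smul, trace_smul, htr₁, htr₂, smul_eq_mul, smul_eq_mul,
      mul_one, mul_one]
    exact_mod_cast congrArg (fun x : ℝ => (x : ℂ)) hq
  have hsum1 : ρ11 + ρ22 = 1 := by
    have h := congrArg Matrix.trace hdecomp0
    rw [htrρ0, trace_add, trace_vmv, trace_vmv, r11, r22] at h
    exact_mod_cast h.symm
  -- q₂ = (1-C₁)ρ11 + C₂ρ22
  have hq2val : (1 - C₁) * ρ11 + C₂ * ρ22 = q₂ := by
    have h := weighted_trace (1 - C₁) C₂ q₂ ρ₂ 1 w₁ w₂ hdecomp2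
    rw [mul_one, htr₂, one_mulVec, one_mulVec, r11, r22] at h
    simpa using h.symm
  -- the discriminant D
  have hDpos : 0 < ρ11 * ρ22 - Complex.normSq ρ12 := by
    set y : Fin 2 → ℂ := (ρ22 : ℂ) • ν₁ - (starRingEnd ℂ ρ12) • ν₂ with hy
    have hyne : y ≠ 0 := by
      intro h
      have h1 : star ν₁ ⬝ᵥ y = (ρ22 : ℂ) := by
        rw [hy, dp_comb, hν₁, hν₁₂, mul_one, mul_zero, sub_zero]
      rw [h, dotProduct_zero] at h1
      exact (ne_of_gt hρ22pos) (by exact_mod_cast h1.symm)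
    have hu_eq : (ρ22 : ℂ) • w₁ - (starRingEnd ℂ ρ12) • w₂ = S *ᵥ y := by
      rw [hy, mulVec_sub, mulVec_smul, mulVec_smul, hw₁, hw₂]
    have hpos := hρ0.dotProduct_mulVec_pos hyne
    rw [← hSS, ← dp_mul S hSH, ← hu_eq] at hpos
    have hval : star ((ρ22 : ℂ) • w₁ - (starRingEnd ℂ ρ12) • w₂)
        ⬝ᵥ ((ρ22 : ℂ) • w₁ - (starRingEnd ℂ ρ12) • w₂)
        = ((ρ22 * (ρ11 * ρ22 - Complex.normSq ρ12) : ℝ) : ℂ) := by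
      rw [comb_dp, dp_comb, dp_comb, r11, r22, r12, r21, Complex.conj_conj,
        Complex.conj_ofReal]
      push_cast
      rw [← Complex.normSq_eq_conj_mul_self]
      ring
    rw [hval] at hpos
    have := Complex.zero_lt_real.mp hpos
    nlinarith
  -- scalar machinery
  have hPIexp : ∀ M : Matrix (Fin 2) (Fin 2) ℂ, PIof q₁ q₂ ρ₁ ρ₂ M
      = (star w₁ ⬝ᵥ (M *ᵥ w₁)).re + (star w₂ ⬝ᵥ (M *ᵥ w₂)).re := by
    intro M
    have hd : ((1 : ℝ) : ℂ) • rho0 q₁ q₂ ρ₁ ρ₂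
        = ((1 : ℝ) : ℂ) • vecMulVec w₁ (star w₁) + ((1 : ℝ) : ℂ) • vecMulVec w₂ (star w₂) := by
      push_cast
      rw [one_smul, one_smul, one_smul]
      exact hdecomp0
    have h := weighted_trace 1 1 1 (rho0 q₁ q₂ ρ₁ ρ₂) M w₁ w₂ hd
    simpa [PIof] using h
  have hP1exp : ∀ M : Matrix (Fin 2) (Fin 2) ℂ, q₁ * (Matrix.trace (ρ₁ * M)).re
      = C₁ * (star w₁ ⬝ᵥ (M *ᵥ w₁)).re + (1 - C₂) * (star w₂ ⬝ᵥ (M *ᵥ w₂)).re :=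
    fun M => weighted_trace C₁ (1 - C₂) q₁ ρ₁ M w₁ w₂ hdecomp1
  have hP2exp : ∀ M : Matrix (Fin 2) (Fin 2) ℂ, q₂ * (Matrix.trace (ρ₂ * M)).re
      = (1 - C₁) * (star w₁ ⬝ᵥ (M *ᵥ w₁)).re + C₂ * (star w₂ ⬝ᵥ (M *ᵥ w₂)).re :=
    fun M => weighted_trace (1 - C₁) C₂ q₂ ρ₂ M w₁ w₂ hdecomp2
  have hPbarexp : ∀ (q : ℝ) (M₀ M₁ M₂ : Matrix (Fin 2) (Fin 2) ℂ),
      PbarCor q q₁ q₂ ρ₁ ρ₂ M₀ M₁ M₂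
        = q * ((star w₁ ⬝ᵥ (M₀ *ᵥ w₁)).re + (star w₂ ⬝ᵥ (M₀ *ᵥ w₂)).re)
          + (C₁ * (star w₁ ⬝ᵥ (M₁ *ᵥ w₁)).re + (1 - C₂) * (star w₂ ⬝ᵥ (M₁ *ᵥ w₂)).re)
          + ((1 - C₁) * (star w₁ ⬝ᵥ (M₂ *ᵥ w₁)).re + C₂ * (star w₂ ⬝ᵥ (M₂ *ᵥ w₂)).re) := by
    intro q M₀ M₁ M₂
    rw [PbarCor, Pcor, hPIexp, hP1exp, hP2exp]
    ring
  have hsumA : ∀ M₀ M₁ M₂ : Matrix (Fin 2) (Fin 2) ℂ, M₀ + M₁ + M₂ = 1 →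
      (star w₁ ⬝ᵥ (M₀ *ᵥ w₁)).re + (star w₁ ⬝ᵥ (M₁ *ᵥ w₁)).re
        + (star w₁ ⬝ᵥ (M₂ *ᵥ w₁)).re = ρ11 := by
    intro M₀ M₁ M₂ hsum
    have h : star w₁ ⬝ᵥ ((M₀ + M₁ + M₂) *ᵥ w₁) = (ρ11 : ℂ) := by
      rw [hsum, one_mulVec, r11]
    rw [add_mulVec, add_mulVec, dotProduct_add, dotProduct_add] at h
    have := congrArg Complex.re h
    simpa using this
  have hsumB : ∀ M₀ M₁ M₂ : Matrix (Fin 2) (Fin 2) ℂ, M₀ + M₁ + M₂ = 1 →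
      (star w₂ ⬝ᵥ (M₀ *ᵥ w₂)).re + (star w₂ ⬝ᵥ (M₁ *ᵥ w₂)).re
        + (star w₂ ⬝ᵥ (M₂ *ᵥ w₂)).re = ρ22 := by
    intro M₀ M₁ M₂ hsum
    have h : star w₂ ⬝ᵥ ((M₀ + M₁ + M₂) *ᵥ w₂) = (ρ22 : ℂ) := by
      rw [hsum, one_mulVec, r22]
    rw [add_mulVec, add_mulVec, dotProduct_add, dotProduct_add] at h
    have := congrArg Complex.re h
    simpa using this
  -- master identities
  have hmaster : ∀ M₀ M₁ M₂ : Matrix (Fin 2) (Fin 2) ℂ, IsPOVM M₀ M₁ M₂ →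
      q₂ - PbarCor (1 - C₁) q₁ q₂ ρ₁ ρ₂ M₀ M₁ M₂
        = (C₁ + C₂ - 1) * (star w₂ ⬝ᵥ (M₀ *ᵥ w₂)).re
          + (1 - 2 * C₁) * (star w₁ ⬝ᵥ (M₁ *ᵥ w₁)).re
          + (2 * C₂ - 1) * (star w₂ ⬝ᵥ (M₁ *ᵥ w₂)).re := by
    intro M₀ M₁ M₂ hp
    have hA := hsumA M₀ M₁ M₂ hp.2.2.2
    have hB := hsumB M₀ M₁ M₂ hp.2.2.2
    rw [hPbarexp, ← hq2val, ← hA, ← hB]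
    ring
  have hmaster0 : ∀ M₀ M₁ M₂ : Matrix (Fin 2) (Fin 2) ℂ, IsPOVM M₀ M₁ M₂ →
      q₂ - Pcor q₁ q₂ ρ₁ ρ₂ M₁ M₂
        = (1 - C₁) * (star w₁ ⬝ᵥ (M₀ *ᵥ w₁)).re + C₂ * (star w₂ ⬝ᵥ (M₀ *ᵥ w₂)).re
          + (1 - 2 * C₁) * (star w₁ ⬝ᵥ (M₁ *ᵥ w₁)).re
          + (2 * C₂ - 1) * (star w₂ ⬝ᵥ (M₁ *ᵥ w₂)).re := by
    intro M₀ M₁ M₂ hp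
    have hA := hsumA M₀ M₁ M₂ hp.2.2.2
    have hB := hsumB M₀ M₁ M₂ hp.2.2.2
    rw [Pcor, hP1exp, hP2exp, ← hq2val, ← hA, ← hB]
    ring
  -- nonnegativity shorthands
  have hfA : ∀ M : Matrix (Fin 2) (Fin 2) ℂ, M.PosSemidef → 0 ≤ (star w₁ ⬝ᵥ (M *ᵥ w₁)).re :=
    fun M h => nonneg_re_of_psd h w₁
  have hfB : ∀ M : Matrix (Fin 2) (Fin 2) ℂ, M.PosSemidef → 0 ≤ (star w₂ ⬝ᵥ (M *ᵥ w₂)).re :=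
    fun M h => nonneg_re_of_psd h w₂
  set D : ℝ := ρ11 * ρ22 - Complex.normSq ρ12 with hD
  set u : Fin 2 → ℂ := (ρ22 : ℂ) • w₁ - (starRingEnd ℂ ρ12) • w₂ with hu
  have hu1 : star u ⬝ᵥ w₁ = (D : ℂ) := by
    rw [hu, comb_dp, r11, r21, Complex.conj_conj, Complex.conj_ofReal,
      Complex.mul_conj, hD]
    push_cast
    ring
  have hu2 : star u ⬝ᵥ w₂ = 0 := by
    rw [hu, comb_dp, r12, r22, Complex.conj_conj, Complex.conj_ofReal]
    ring
  have hw1u : star w₁ ⬝ᵥ u = (D : ℂ) := by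
    rw [dp_conj u w₁, hu1, Complex.conj_ofReal]
  have hw2u : star w₂ ⬝ᵥ u = 0 := by
    rw [dp_conj u w₂, hu2, map_zero]
  have huu : star u ⬝ᵥ u = ((ρ22 * D : ℝ) : ℂ) := by
    nth_rewrite 2 [hu]
    rw [dp_comb, hu1, hu2, mul_zero, sub_zero]
    push_cast
    ring
  -- the construction
  have hconstr : ∀ t : ℝ, 0 ≤ t → t ≤ D / ρ22 →
      ∃ M₀ M₁ M₂ : Matrix (Fin 2) (Fin 2) ℂ, IsPOVM M₀ M₁ M₂ ∧
        PIof q₁ q₂ ρ₁ ρ₂ M₀ = t ∧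
        ∀ q : ℝ, PbarCor q q₁ q₂ ρ₁ ρ₂ M₀ M₁ M₂ = q * t + q₂ - (1 - C₁) * t := by
    intro t ht0 ht1
    set c : ℝ := t / D ^ 2 with hc
    have hc0 : 0 ≤ c := div_nonneg ht0 (sq_nonneg D)
    set M₀ : Matrix (Fin 2) (Fin 2) ℂ := (c : ℂ) • vecMulVec u (star u) with hM₀
    -- quadratic form values of M₀
    have hqf : ∀ x : Fin 2 → ℂ, star x ⬝ᵥ (M₀ *ᵥ x)
        = (c : ℂ) * ((star x ⬝ᵥ u) * (star u ⬝ᵥ x)) := by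
      intro x
      rw [hM₀, smul_mulVec, dotProduct_smul, smul_eq_mul, quadform_vmv]
    have hA0 : (star w₁ ⬝ᵥ (M₀ *ᵥ w₁)).re = t := by
      rw [hqf w₁, hw1u, hu1]
      have : ((c : ℂ)) * ((D : ℂ) * (D : ℂ)) = ((c * D ^ 2 : ℝ) : ℂ) := by push_cast; ring
      rw [this, Complex.ofReal_re, hc]
      field_simp
    have hB0 : (star w₂ ⬝ᵥ (M₀ *ᵥ w₂)).re = 0 := by
      rw [hqf w₂, hw2u, hu2]
      simp
    -- M₂ := 1 - M₀ is PSD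
    have hM₀psd : M₀.PosSemidef := psd_smul_vmv c hc0 u
    have hM₂psd : (1 - M₀).PosSemidef := by
      refine Matrix.PosSemidef.of_dotProduct_mulVec_nonneg ?_ ?_
      · show _ᴴ = _
        rw [conjTranspose_sub, conjTranspose_one, hM₀psd.1]
      · intro x
        have hx : star x ⬝ᵥ ((1 - M₀) *ᵥ x)
            = star x ⬝ᵥ x - (c : ℂ) * ((star x ⬝ᵥ u) * (star u ⬝ᵥ x)) := by
          rw [sub_mulVec, one_mulVec, dotProduct_sub, hqf x]
        have hxx : 0 ≤ star x ⬝ᵥ x := dotProduct_star_self_nonneg x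
        have hxre : star x ⬝ᵥ x = (((star x ⬝ᵥ x).re : ℝ) : ℂ) := by
          apply Complex.ext
          · simp
          · rw [← (Complex.le_def.mp hxx).2]; simp
        have hb : (star x ⬝ᵥ u) * (star u ⬝ᵥ x) = ((Complex.normSq (star u ⬝ᵥ x) : ℝ) : ℂ) := by
          rw [dp_conj u x, Complex.normSq_eq_conj_mul_self]
        rw [hx, hb, hxre]
        have key : c * Complex.normSq (star u ⬝ᵥ x) ≤ (star x ⬝ᵥ x).re := by
          have h1 : Complex.normSq (star u ⬝ᵥ x) ≤ (ρ22 * D) * (star x ⬝ᵥ x).re := by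
            have := cs u x
            rw [huu] at this
            simpa using this
          have h2 : c * Complex.normSq (star u ⬝ᵥ x) ≤ c * ((ρ22 * D) * (star x ⬝ᵥ x).re) :=
            mul_le_mul_of_nonneg_left h1 hc0
          have h3 : c * ((ρ22 * D) * (star x ⬝ᵥ x).re)
              = (t * ρ22 / D) * (star x ⬝ᵥ x).re := by
            rw [hc]; field_simp
          have h4 : t * ρ22 ≤ D := by
            have := (le_div_iff₀ hρ22pos).mp ht1
            linarith
          have h5 : (t * ρ22 / D) * (star x ⬝ᵥ x).re ≤ 1 * (star x ⬝ᵥ x).re := by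
            apply mul_le_mul_of_nonneg_right _ (Complex.le_def.mp hxx).1
            rw [div_le_one hDpos]
            exact h4
          calc c * Complex.normSq (star u ⬝ᵥ x)
              ≤ c * (ρ22 * D * (star x ⬝ᵥ x).re) := h2
            _ = t * ρ22 / D * (star x ⬝ᵥ x).re := h3
            _ ≤ 1 * (star x ⬝ᵥ x).re := h5
            _ = (star x ⬝ᵥ x).re := one_mul _
        have : ((star x ⬝ᵥ x).re : ℂ) - (c : ℂ) * ((Complex.normSq (star u ⬝ᵥ x) : ℝ) : ℂ)
            = (((star x ⬝ᵥ x).re - c * Complex.normSq (star u ⬝ᵥ x) : ℝ) : ℂ) := by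
          push_cast; ring
        rw [this]
        exact Complex.zero_le_real.mpr (by linarith)
    refine ⟨M₀, 0, 1 - M₀, ⟨hM₀psd, psd_zero, hM₂psd, by abel⟩, ?_, ?_⟩
    · rw [hPIexp, hA0, hB0, add_zero]
    · intro q
      have hA2 : (star w₁ ⬝ᵥ ((1 - M₀) *ᵥ w₁)).re = ρ11 - t := by
        rw [sub_mulVec, one_mulVec, dotProduct_sub, Complex.sub_re, r11, Complex.ofReal_re, hA0]
      have hB2 : (star w₂ ⬝ᵥ ((1 - M₀) *ᵥ w₂)).re = ρ22 := by
        rw [sub_mulVec, one_mulVec, dotProduct_sub, Complex.sub_re, r22, Complex.ofReal_re, hB0]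
        ring
      rw [hPbarexp, hA0, hB0, hA2, hB2]
      simp only [zero_mulVec, dotProduct_zero, Complex.zero_re, mul_zero, add_zero, zero_add]
      nlinarith [hq2val]
  -- Part 1: PbarOpt (1-C₁) = q₂
  have hub : ∀ x ∈ {x : ℝ | ∃ M₀ M₁ M₂, IsPOVM M₀ M₁ M₂ ∧
      PbarCor (1 - C₁) q₁ q₂ ρ₁ ρ₂ M₀ M₁ M₂ = x}, x ≤ q₂ := by
    rintro x ⟨M₀, M₁, M₂, hp, rfl⟩
    have h := hmaster M₀ M₁ M₂ hp
    have n1 := hfB M₀ hp.1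
    have n2 := hfA M₁ hp.2.1
    have n3 := hfB M₁ hp.2.1
    linarith [mul_nonneg (by linarith : (0:ℝ) ≤ C₁ + C₂ - 1) n1,
      mul_nonneg (by linarith : (0:ℝ) ≤ 1 - 2 * C₁) n2,
      mul_nonneg (by linarith : (0:ℝ) ≤ 2 * C₂ - 1) n3]
  have hDdivnn : (0:ℝ) ≤ D / ρ22 := le_of_lt (div_pos hDpos hρ22pos)
  obtain ⟨Z₀, Z₁, Z₂, hpZ, hPIZ, hvalZ⟩ := hconstr 0 le_rfl hDdivnn
  have hmemq₂ : q₂ ∈ {x : ℝ | ∃ M₀ M₁ M₂, IsPOVM M₀ M₁ M₂ ∧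
      PbarCor (1 - C₁) q₁ q₂ ρ₁ ρ₂ M₀ M₁ M₂ = x} :=
    ⟨Z₀, Z₁, Z₂, hpZ, by rw [hvalZ]; ring⟩
  have part1 : PbarOpt (1 - C₁) q₁ q₂ ρ₁ ρ₂ = q₂ :=
    le_antisymm (csSup_le ⟨q₂, hmemq₂⟩ hub) (le_csSup ⟨q₂, hub⟩ hmemq₂)
  -- Part 2: PIset (1-C₁) = Icc 0 (1-Q₂)
  have hIcc : 1 - (ρ22 + ‖ρ12‖ ^ 2 / ρ22) = D / ρ22 := by
    rw [Complex.sq_norm, hD]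
    have h : ρ11 = 1 - ρ22 := by linarith
    rw [h]
    field_simp
    ring
  have part2 : PIset (1 - C₁) q₁ q₂ ρ₁ ρ₂
      = Set.Icc 0 (1 - (ρ22 + ‖ρ12‖ ^ 2 / ρ22)) := by
    rw [hIcc]
    ext Q
    constructor
    · rintro ⟨M₀, M₁, M₂, hp, hopt, hPIQ⟩
      rw [part1] at hopt
      have h := hmaster M₀ M₁ M₂ hp
      rw [hopt] at h
      have n1 := hfB M₀ hp.1
      have n2 := hfA M₁ hp.2.1
      have n3 := hfB M₁ hp.2.1
      have hB0 : (star w₂ ⬝ᵥ (M₀ *ᵥ w₂)).re = 0 := by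
        nlinarith [mul_nonneg (by linarith : (0:ℝ) ≤ 1 - 2 * C₁) n2,
          mul_nonneg (by linarith : (0:ℝ) ≤ 2 * C₂ - 1) n3]
      have hz : star w₂ ⬝ᵥ (M₀ *ᵥ w₂) = 0 := by
        rw [eq_re_of_psd hp.1 w₂, hB0]
        simp
      have hMw₂ : M₀ *ᵥ w₂ = 0 := (hp.1.dotProduct_mulVec_zero_iff w₂).mp hz
      have hQA : Q = (star w₁ ⬝ᵥ (M₀ *ᵥ w₁)).re := by
        rw [hPIexp] at hPIQ
        linarith
      have hMu : M₀ *ᵥ u = (ρ22 : ℂ) • (M₀ *ᵥ w₁) := by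
        rw [hu, mulVec_sub, mulVec_smul, mulVec_smul, hMw₂, smul_zero, sub_zero]
      have h2' : star w₂ ⬝ᵥ (M₀ *ᵥ w₁) = 0 := by
        rw [conj_form M₀ hp.1.1 w₁ w₂, hMw₂, dotProduct_zero, map_zero]
      have e1 : star u ⬝ᵥ (M₀ *ᵥ u) = ((ρ22 ^ 2 : ℝ) : ℂ) * (star w₁ ⬝ᵥ (M₀ *ᵥ w₁)) := by
        rw [hMu, dotProduct_smul, smul_eq_mul]
        nth_rewrite 1 [hu]
        rw [comb_dp, Complex.conj_conj, Complex.conj_ofReal, h2']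
        push_cast
        ring
      have h1M : (1 : Matrix (Fin 2) (Fin 2) ℂ) - M₀ = M₁ + M₂ := by
        rw [← hp.2.2.2]
        abel
      have e2 : 0 ≤ (star u ⬝ᵥ ((1 - M₀) *ᵥ u)).re := by
        rw [h1M]
        exact nonneg_re_of_psd (psd_add hp.2.1 hp.2.2.1) u
      have e3 : star u ⬝ᵥ ((1 - M₀) *ᵥ u) = star u ⬝ᵥ u - star u ⬝ᵥ (M₀ *ᵥ u) := by
        rw [sub_mulVec, one_mulVec, dotProduct_sub]
      have e4 : (star u ⬝ᵥ (M₀ *ᵥ u)).re = ρ22 ^ 2 * (star w₁ ⬝ᵥ (M₀ *ᵥ w₁)).re := by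
        rw [e1, Complex.re_ofReal_mul]
      have e5 : ρ22 ^ 2 * Q ≤ ρ22 * D := by
        rw [e3] at e2
        rw [Complex.sub_re, huu, Complex.ofReal_re, e4] at e2
        rw [hQA]
        linarith
      constructor
      · rw [hQA]
        exact hfA M₀ hp.1
      · rw [le_div_iff₀ hρ22pos]
        nlinarith
    · rintro ⟨hQ0, hQ1⟩
      obtain ⟨M₀, M₁, M₂, hp, hPI, hval⟩ := hconstr Q hQ0 hQ1
      exact ⟨M₀, M₁, M₂, hp, by rw [hval (1 - C₁), part1]; ring, hPI⟩
  -- Part 3: q0low = 1 - C₁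
  have hTub : ∀ q ∈ {q : ℝ | 0 < q ∧ (0 : ℝ) ∈ PIset q q₁ q₂ ρ₁ ρ₂}, q ≤ 1 - C₁ := by
    rintro q ⟨hq0, M₀, M₁, M₂, hp, hopt, hPI0⟩
    by_contra hgt
    push_neg at hgt
    set t : ℝ := D / ρ22 with ht
    have ht0 : 0 < t := div_pos hDpos hρ22pos
    obtain ⟨N₀, N₁, N₂, hpN, hPIN, hvalN⟩ := hconstr t (le_of_lt ht0) le_rfl
    have hbdd : ∀ x ∈ {x : ℝ | ∃ K₀ K₁ K₂, IsPOVM K₀ K₁ K₂ ∧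
        PbarCor q q₁ q₂ ρ₁ ρ₂ K₀ K₁ K₂ = x}, x ≤ q + q₂ := by
      rintro x ⟨K₀, K₁, K₂, hpK, rfl⟩
      have hA := hsumA K₀ K₁ K₂ hpK.2.2.2
      have hB := hsumB K₀ K₁ K₂ hpK.2.2.2
      have m1 := hfA K₀ hpK.1
      have m2 := hfB K₀ hpK.1
      have m3 := hfA K₁ hpK.2.1
      have m4 := hfB K₁ hpK.2.1
      have m5 := hfA K₂ hpK.2.2.1
      have m6 := hfB K₂ hpK.2.2.1
      have hPIle : PIof q₁ q₂ ρ₁ ρ₂ K₀ ≤ 1 := by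
        rw [hPIexp]
        linarith
      have hPIge : 0 ≤ PIof q₁ q₂ ρ₁ ρ₂ K₀ := by
        rw [hPIexp]
        linarith
      have hPcor : Pcor q₁ q₂ ρ₁ ρ₂ K₁ K₂ ≤ q₂ := by
        have h := hmaster0 K₀ K₁ K₂ hpK
        linarith [mul_nonneg (by linarith : (0:ℝ) ≤ 1 - C₁) m1,
          mul_nonneg (by linarith : (0:ℝ) ≤ C₂) m2,
          mul_nonneg (by linarith : (0:ℝ) ≤ 1 - 2 * C₁) m3,
          mul_nonneg (by linarith : (0:ℝ) ≤ 2 * C₂ - 1) m4]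
      rw [PbarCor]
      have := mul_le_mul_of_nonneg_left hPIle (le_of_lt hq0)
      linarith
    have h1 : PbarCor q q₁ q₂ ρ₁ ρ₂ M₀ M₁ M₂ ≤ q₂ := by
      have h := hmaster0 M₀ M₁ M₂ hp
      have m1 := hfA M₀ hp.1
      have m2 := hfB M₀ hp.1
      have m3 := hfA M₁ hp.2.1
      have m4 := hfB M₁ hp.2.1
      have hPcor : Pcor q₁ q₂ ρ₁ ρ₂ M₁ M₂ ≤ q₂ := by
        linarith [mul_nonneg (by linarith : (0:ℝ) ≤ 1 - C₁) m1,
          mul_nonneg (by linarith : (0:ℝ) ≤ C₂) m2,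
          mul_nonneg (by linarith : (0:ℝ) ≤ 1 - 2 * C₁) m3,
          mul_nonneg (by linarith : (0:ℝ) ≤ 2 * C₂ - 1) m4]
      rw [PbarCor, hPI0]
      simpa using hPcor
    have h2 : q * t + q₂ - (1 - C₁) * t ≤ PbarOpt q q₁ q₂ ρ₁ ρ₂ := by
      rw [← hvalN q]
      exact le_csSup ⟨q + q₂, hbdd⟩ ⟨N₀, N₁, N₂, hpN, rfl⟩
    rw [hopt] at h1
    nlinarith [mul_pos (by linarith : (0:ℝ) < q - (1 - C₁)) ht0]
  have hTmem : (1 - C₁) ∈ {q : ℝ | 0 < q ∧ (0 : ℝ) ∈ PIset q q₁ q₂ ρ₁ ρ₂} := by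
    constructor
    · linarith
    · rw [part2]
      exact ⟨le_rfl, by rw [hIcc]; exact hDdivnn⟩
  exact ⟨part1, part2,
    le_antisymm (csSup_le ⟨_, hTmem⟩ hTub) (le_csSup ⟨1 - C₁, hTub⟩ hTmem)⟩
  

end FRIR
end
end
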